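/- For every l ≥ 0, the full prefix product is invariant under the doubling recursion: g⁽ˡ⁾₀ ∘ g⁽ˡ⁾₁ ∘ ⋯ ∘ g⁽ˡ⁾_n = g₁ ∘ g₂ ∘ ⋯ ∘ g_n. -/

import Mathlib

/-- The doubling recursion of Algorithm 1 (group composition): `dbl n g 0 i = g i`
(with `g 0 = e` assumed), and
`dbl n g (l+1) i = dbl n g l ((2i−n−1)⁺) ∘ dbl n g l ((2i−n)⁺)`
(natural subtraction implements the truncation `(·)⁺`). -/
def dbl {G : Type*} [Group G] (n : ℕ) (g : ℕ → G) : ℕ → ℕ → G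
  | 0, i => g i
  | l + 1, i => dbl n g l (2 * i - n - 1) * dbl n g l (2 * i - n)

lemma ofFn_eq_range_map {G : Type*} (m : ℕ) (F : ℕ → G) :
    (List.ofFn fun i : Fin m => F (i : ℕ)) = (List.range m).map F := by
  apply List.ext_getElem <;> simp

lemma dbl_zero {G : Type*} [Group G] (n : ℕ) (g : ℕ → G) (hg0 : g 0 = 1) (l : ℕ) :
    dbl n g l 0 = 1 := by
  induction l with
  | zero => simpa [dbl]
  | succ l ih => simp [dbl, Nat.zero_sub, ih]

lemma key {G : Type*} [Group G] (a : ℕ → G) (ha : a 0 = 1) :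
    ∀ n : ℕ, ((List.range (n+1)).map (fun i => a (2*i - n - 1) * a (2*i - n))).prod
      = ((List.range (n+1)).map a).prod := by
  intro n
  induction n using Nat.strong_induction_on with
  | _ n ih =>
    match n with
    | 0 => simp [List.range_succ, ha]
    | 1 => simp [List.range_succ, ha]
    | (n+2) =>
      have hL : ((List.range (n+3)).map
          (fun i => a (2*i - (n+2) - 1) * a (2*i - (n+2)))).prod
          = ((List.range (n+1)).map a).prod * (a (n+1) * a (n+2)) := by
        rw [List.range_succ_eq_map (n := n+2)]
        simp only [List.map_cons, List.map_map, List.prod_cons]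
        have h2 : ((List.range (n+2)).map
            ((fun i => a (2*i - (n+2) - 1) * a (2*i - (n+2))) ∘ Nat.succ)).prod
            = ((List.range (n+2)).map (fun i => a (2*i - n - 1) * a (2*i - n))).prod := by
          congr 1
          apply List.map_congr_left
          intro i _
          simp only [Function.comp]
          congr 2 <;> omega
        rw [h2]
        have h3 : List.range (n+2) = List.range (n+1) ++ [n+1] := by
          rw [List.range_succ]
        rw [h3]
        simp only [List.map_append, List.prod_append, List.map_cons, List.map_nil,
          List.prod_cons, List.prod_nil]
        rw [ih n (by omega)]
        have e1 : 2*(n+1) - n - 1 = n+1 := by omega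
        have e2 : 2*(n+1) - n = n+2 := by omega
        have e3 : 2*0 - (n+2) - 1 = 0 := by omega
        have e4 : 2*0 - (n+2) = 0 := by omega
        rw [e1, e2, e3, e4, ha]
        simp [mul_assoc]
      have hR : ((List.range (n+3)).map a).prod
          = ((List.range (n+1)).map a).prod * (a (n+1) * a (n+2)) := by
        have h4 : List.range (n+3) = List.range (n+1) ++ [n+1, n+2] := by
          rw [List.range_succ, List.range_succ]; simp
        rw [h4]
        simp [mul_assoc]
      rw [hL, hR]

/-- **Invariance of the full prefix product under the doubling recursion.**
For every `l ≥ 0`, `g⁽ˡ⁾₀ ∘ g⁽ˡ⁾₁ ∘ ⋯ ∘ g⁽ˡ⁾_n = g₁ ∘ g₂ ∘ ⋯ ∘ g_n`. -/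
theorem doubling_prefix_product_invariant {G : Type*} [Group G] (n : ℕ+) (g : ℕ → G)
    (hg0 : g 0 = 1) (l : ℕ) :
    (List.ofFn fun i : Fin ((n : ℕ) + 1) => dbl (n : ℕ) g l (i : ℕ)).prod
      = (List.ofFn fun i : Fin (n : ℕ) => g ((i : ℕ) + 1)).prod := by
  have hR : (List.ofFn fun i : Fin (n : ℕ) => g ((i : ℕ) + 1)).prod
      = ((List.range ((n : ℕ) + 1)).map g).prod := by
    rw [List.range_succ_eq_map]
    simp only [List.map_cons, List.prod_cons, hg0, one_mul, List.map_map]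
    rw [ofFn_eq_range_map (n : ℕ) (fun i => g (i + 1))]
    rfl
  rw [ofFn_eq_range_map, hR]
  induction l with
  | zero => rfl
  | succ l ih =>
    rw [← ih]
    have : ((List.range ((n:ℕ)+1)).map (dbl (n:ℕ) g (l+1))).prod
        = ((List.range ((n:ℕ)+1)).map
            (fun i => dbl (n:ℕ) g l (2*i - (n:ℕ) - 1) * dbl (n:ℕ) g l (2*i - (n:ℕ)))).prod := by
      rfl
    rw [this, key (dbl (n:ℕ) g l) (dbl_zero _ _ hg0 l) (n:ℕ)]
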